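/- DM is semantically admissible for support: for any base B and formula φ, if ⊩_B φ→⊥ then ⊩_B φ⊥. -/
import Mathlib


/-- Literals: assertions `pos c` and denials `neg c` of contents `c`. -/
inductive Lit (C : Type) : Type
  | pos : C → Lit C
  | neg : C → Lit C

/-- Dual literal: swaps assertion and denial. -/
def Lit.dual {C : Type} : Lit C → Lit C
  | .pos c => .neg c
  | .neg c => .pos c

/-- Formulas over literals. -/
inductive Form (C : Type) : Type
  | lit : Lit C → Form C
  | bot : Form C
  | top : Form C
  | and : Form C → Form C → Form C
  | or  : Form C → Form C → Form C
  | imp : Form C → Form C → Form C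

/-- The de Morgan dual operator on formulas. -/
def Form.dual {C : Type} : Form C → Form C
  | .lit l => .lit l.dual
  | .bot => .top
  | .top => .bot
  | .and φ ψ => .or φ.dual ψ.dual
  | .or φ ψ => .and φ.dual ψ.dual
  | .imp φ ψ => .and φ ψ.dual

/-- A valuation: maps literals to {0,1} with `v (neg c) = 1 - v (pos c)`. -/
structure Val (C : Type) where
  v : Lit C → ℕ
  le_one : ∀ l, v l ≤ 1
  dual_neg : ∀ c : C, v (Lit.neg c) = 1 - v (Lit.pos c)

/-- Truth-functional extension of a valuation to formulas. -/
def Val.eval {C : Type} (v : Val C) : Form C → ℕ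
  | .lit l => v.v l
  | .bot => 0
  | .top => 1
  | .and φ ψ => min (v.eval φ) (v.eval ψ)
  | .or φ ψ => max (v.eval φ) (v.eval ψ)
  | .imp φ ψ => max (1 - v.eval φ) (v.eval ψ)

/-- Classical consequence. -/
def Entails {C : Type} (Γ : Set (Form C)) (φ : Form C) : Prop :=
  ∀ v : Val C, (∀ γ ∈ Γ, v.eval γ = 1) → v.eval φ = 1

/-- The natural deduction system NK±: intuitionistic rules plus DM and EXC. -/
inductive NK {C : Type} : Set (Form C) → Form C → Prop
  | hyp {Γ} {φ : Form C} : φ ∈ Γ → NK Γ φ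
  | topI {Γ} : NK Γ .top
  | botE {Γ} {φ : Form C} : NK Γ .bot → NK Γ φ
  | impI {Γ} {φ ψ : Form C} : NK (insert φ Γ) ψ → NK Γ (.imp φ ψ)
  | impE {Γ} {φ ψ : Form C} : NK Γ (.imp φ ψ) → NK Γ φ → NK Γ ψ
  | andI {Γ} {φ ψ : Form C} : NK Γ φ → NK Γ ψ → NK Γ (.and φ ψ)
  | andE1 {Γ} {φ ψ : Form C} : NK Γ (.and φ ψ) → NK Γ φ
  | andE2 {Γ} {φ ψ : Form C} : NK Γ (.and φ ψ) → NK Γ ψ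
  | orI1 {Γ} {φ ψ : Form C} : NK Γ φ → NK Γ (.or φ ψ)
  | orI2 {Γ} {φ ψ : Form C} : NK Γ ψ → NK Γ (.or φ ψ)
  | orE {Γ} {φ ψ χ : Form C} :
      NK Γ (.or φ ψ) → NK (insert φ Γ) χ → NK (insert ψ Γ) χ → NK Γ χ
  | dm {Γ} {φ : Form C} : NK (insert φ Γ) .bot → NK Γ φ.dual
  | exc {Γ} {φ : Form C} : NK Γ φ → NK Γ φ.dual → NK Γ .bot

/-- An atomic rule `(L₁⇒l₁),…,(Lₙ⇒lₙ) ⇒ l` (the case of an empty premiss list,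
together with `APP₁`/`APP₂`, covers both forms of atomic rule). -/
structure AtomicRule (C : Type) where
  prems : List (Set (Lit C) × Lit C)
  concl : Lit C

/-- A base is a set of atomic rules. -/
abbrev Base (C : Type) := Set (AtomicRule C)

/-- Derivability in a base.  Conclusions are `some l` (a literal) or `none` (⊥).
Closed under REF, APP₁/APP₂, ABS and DM. -/
inductive Deriv {C : Type} (B : Base C) : Set (Lit C) → Option (Lit C) → Prop
  | ref {L} {l : Lit C} : l ∈ L → Deriv B L (some l)
  | app {L} (r : AtomicRule C) : r ∈ B →
      (∀ p ∈ r.prems, Deriv B (p.1 ∪ L) (some p.2)) → Deriv B L (some r.concl)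
  | abs {L} {l : Lit C} : Deriv B L (some l) → Deriv B L (some l.dual) →
      Deriv B L none
  | dm {L} {l : Lit C} : Deriv B (insert l L) none → Deriv B L (some l.dual)

/-- Support in a base (empty context). -/
def Supp {C : Type} (B : Base C) : Form C → Prop
  | .lit l => Deriv B ∅ (some l)
  | .bot => ∀ l : Lit C, Deriv B ∅ (some l)
  | .top => True
  | .and φ ψ => Supp B φ ∧ Supp B ψ
  | .or φ ψ => ∀ X : Base C, B ⊆ X → ∀ l : Lit C,
      (∀ Y : Base C, X ⊆ Y → Supp Y φ → Deriv Y ∅ (some l)) →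
      (∀ Y : Base C, X ⊆ Y → Supp Y ψ → Deriv Y ∅ (some l)) →
      Deriv X ∅ (some l)
  | .imp φ ψ => ∀ X : Base C, B ⊆ X → Supp X φ → Supp X ψ

/-- Support with a context: `Γ ⊩_B φ`. -/
def SuppCtx {C : Type} (B : Base C) (Γ : Set (Form C)) (φ : Form C) : Prop :=
  ∀ X : Base C, B ⊆ X → (∀ γ ∈ Γ, Supp X γ) → Supp X φ

/-- Validity: support in every base. -/
def Valid {C : Type} (Γ : Set (Form C)) (φ : Form C) : Prop :=
  ∀ B : Base C, SuppCtx B Γ φ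


section Aux
variable {C : Type}

theorem Lit.dual_dual (l : Lit C) : l.dual.dual = l := by cases l <;> rfl

theorem Deriv.mono_base {B B' : Base C} (h : B ⊆ B') {L o}
    (hd : Deriv B L o) : Deriv B' L o := by
  induction hd with
  | ref hl => exact .ref hl
  | app r hr _ ih => exact .app r (h hr) ih
  | abs _ _ ih1 ih2 => exact .abs ih1 ih2
  | dm _ ih => exact .dm ih

theorem Deriv.mono_ctx {B : Base C} {L : Set (Lit C)} {o}
    (hd : Deriv B L o) : ∀ {L' : Set (Lit C)}, L ⊆ L' → Deriv B L' o := by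
  induction hd with
  | ref hl => exact fun h => .ref (h hl)
  | app r hr _ ih =>
      exact fun h => .app r hr (fun p hp => ih p hp (Set.union_subset_union_right _ h))
  | abs _ _ ih1 ih2 => exact fun h => .abs (ih1 h) (ih2 h)
  | dm _ ih => exact fun h => .dm (ih (Set.insert_subset_insert h))

theorem Deriv.of_none {B : Base C} {L} (h : Deriv B L none) (l : Lit C) :
    Deriv B L (some l) := by
  have h1 : Deriv B (insert l.dual L) none := h.mono_ctx (Set.subset_insert _ _)
  have h2 := Deriv.dm h1
  rwa [Lit.dual_dual] at h2

theorem Deriv.replace {B : Base C} {a : Lit C} {L o}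
    (h : Deriv (insert (⟨[], a⟩ : AtomicRule C) B) L o) :
    Deriv B (insert a L) o := by
  induction h with
  | ref hl => exact .ref (Set.mem_insert_iff.mpr (Or.inr hl))
  | app r hr _ ih =>
      rcases Set.mem_insert_iff.mp hr with h1 | h1
      · subst h1; exact .ref (Set.mem_insert _ _)
      · exact .app r h1 (fun p hp => by rw [Set.union_insert]; exact ih p hp)
  | abs _ _ ih1 ih2 => exact .abs ih1 ih2
  | dm _ ih => exact .dm (by rw [Set.insert_comm]; exact ih)

/-- If `l` is derivable in the base extended with the axiom `⇒ l.dual`,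
then `l` is already derivable. -/
theorem pullback {X : Base C} {l : Lit C}
    (h : Deriv (insert (⟨[], l.dual⟩ : AtomicRule C) X) ∅ (some l)) :
    Deriv X ∅ (some l) := by
  have h1 : Deriv X (insert l.dual ∅) (some l) := h.replace
  have h2 : Deriv X (insert l.dual ∅) (some l.dual) := .ref (Set.mem_insert _ _)
  have h4 := Deriv.dm (Deriv.abs h1 h2)
  rwa [Lit.dual_dual] at h4

/-- In a base containing the axiom `⇒ l.dual`, deriving `l` blows up. -/
theorem blowup {Y : Base C} {l : Lit C}
    (hr : (⟨[], l.dual⟩ : AtomicRule C) ∈ Y)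
    (h : Deriv Y ∅ (some l)) : ∀ l' : Lit C, Deriv Y ∅ (some l') := by
  intro l'
  have hd : Deriv Y ∅ (some l.dual) :=
    .app _ hr (by intro p hp; simp at hp)
  exact (Deriv.abs h hd).of_none l'

theorem Supp.mono {φ : Form C} : ∀ {B X : Base C}, B ⊆ X → Supp B φ → Supp X φ := by
  induction φ with
  | lit l => exact fun h hs => Deriv.mono_base h hs
  | bot => exact fun h hs l => Deriv.mono_base h (hs l)
  | top => exact fun _ _ => trivial
  | and φ ψ ihφ ihψ => exact fun h hs => ⟨ihφ h hs.1, ihψ h hs.2⟩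
  | or φ ψ _ _ => exact fun h hs X' hX' => hs X' (h.trans hX')
  | imp φ ψ _ _ => exact fun h hs X' hX' => hs X' (h.trans hX')

theorem Supp.ofBot {B : Base C} (h : ∀ l : Lit C, Deriv B ∅ (some l)) :
    ∀ φ : Form C, Supp B φ := by
  intro φ
  induction φ generalizing B with
  | lit l => exact h l
  | bot => exact h
  | top => trivial
  | and φ ψ ihφ ihψ => exact ⟨ihφ h, ihψ h⟩
  | or φ ψ _ _ => exact fun X hX l _ _ => (h l).mono_base hX
  | imp φ ψ _ ihψ => exact fun X hX _ => ihψ (fun l => (h l).mono_base hX)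

/-- Semantic double-negation elimination. -/
theorem Supp.dne (φ : Form C) : ∀ B : Base C,
    (∀ X : Base C, B ⊆ X → Supp X (.imp φ .bot) → Supp X .bot) → Supp B φ := by
  induction φ with
  | lit l =>
      intro B H
      have hX : B ⊆ insert (⟨[], l.dual⟩ : AtomicRule C) B := Set.subset_insert _ _
      have himp : Supp (insert (⟨[], l.dual⟩ : AtomicRule C) B) (.imp (.lit l) .bot) :=
        fun Y hY hl => blowup (hY (Set.mem_insert _ _)) hl
      exact pullback (H _ hX himp l)
  | bot => exact fun B H => H B subset_rfl (fun Y hY hb => hb)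
  | top => exact fun _ _ => trivial
  | and φ ψ ihφ ihψ =>
      intro B H
      constructor
      · exact ihφ B (fun X hX hφ => H X hX (fun Y hY hand => hφ Y hY hand.1))
      · exact ihψ B (fun X hX hψ => H X hX (fun Y hY hand => hψ Y hY hand.2))
  | or φ ψ _ _ =>
      intro B H X hX l f g
      have hX' : X ⊆ insert (⟨[], l.dual⟩ : AtomicRule C) X := Set.subset_insert _ _
      have himp : Supp (insert (⟨[], l.dual⟩ : AtomicRule C) X) (.imp (.or φ ψ) .bot) := by
        intro Y hY hor
        have hl : Deriv Y ∅ (some l) :=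
          hor Y subset_rfl l
            (fun Z hZ hφ => f Z ((hX'.trans hY).trans hZ) hφ)
            (fun Z hZ hψ => g Z ((hX'.trans hY).trans hZ) hψ)
        exact blowup (hY (Set.mem_insert _ _)) hl
      exact pullback (H _ (hX.trans hX') himp l)
  | imp φ ψ _ ihψ =>
      intro B H X hX hφ
      apply ihψ
      intro Y hY hψbot
      apply H Y (hX.trans hY)
      intro Z hZ himp
      have hψZ : Supp Z ψ := himp Z subset_rfl (Supp.mono (hY.trans hZ) hφ)
      exact hψbot Z hZ hψZ

end Aux

/-- DM is semantically admissible for support. -/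
theorem supp_dm {C : Type} (B : Base C) (φ : Form C)
    (h : Supp B (Form.imp φ .bot)) : Supp B φ.dual := by
  induction φ generalizing B with
  | lit l =>
      have hl : Deriv (insert (⟨[], l⟩ : AtomicRule C) B) ∅ (some l) :=
        .app _ (Set.mem_insert _ _) (by intro p hp; simp at hp)
      have hbot := h _ (Set.subset_insert _ _) hl
      have h3 : Deriv B (insert l ∅) (some l.dual) := (hbot l.dual).replace
      have h4 : Deriv B (insert l ∅) (some l) := .ref (Set.mem_insert _ _)
      exact Deriv.dm (Deriv.abs h4 h3)
  | bot => trivial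
  | top => exact h B subset_rfl trivial
  | and φ ψ ihφ ihψ =>
      intro X hX l f g
      have hX' : X ⊆ insert (⟨[], l.dual⟩ : AtomicRule C) X := Set.subset_insert _ _
      have hφbot : Supp (insert (⟨[], l.dual⟩ : AtomicRule C) X) (.imp φ .bot) := by
        intro Y hY hφY
        have hψbot : Supp Y (.imp ψ .bot) := by
          intro Z hZ hψZ
          exact h Z (hX.trans ((hX'.trans hY).trans hZ)) ⟨Supp.mono hZ hφY, hψZ⟩
        have hψd : Supp Y ψ.dual := ihψ Y hψbot
        have hl : Deriv Y ∅ (some l) := g Y (hX'.trans hY) hψd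
        exact blowup (hY (Set.mem_insert _ _)) hl
      have hφd := ihφ _ hφbot
      exact pullback (f _ hX' hφd)
  | or φ ψ ihφ ihψ =>
      constructor
      · apply ihφ
        intro X hX hφ
        exact h X hX (fun Y hY l f g => f Y subset_rfl (Supp.mono hY hφ))
      · apply ihψ
        intro X hX hψ
        exact h X hX (fun Y hY l f g => g Y subset_rfl (Supp.mono hY hψ))
  | imp φ ψ ihφ ihψ =>
      constructor
      · apply Supp.dne
        intro X hX hφbot
        apply h X hX
        intro Y hY hφ
        exact Supp.ofBot (hφbot Y hY hφ) ψ
      · apply ihψ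
        intro X hX hψ
        exact h X hX (fun Y hY _ => Supp.mono hY hψ)
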